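/- Let d ≥ 1 and let α, β ∈ ℤ^d with α ▹ 0 and β ▹ 0. If there exist no odd positive integers a and b with a·α = b·β (in particular, if α and β are not co-linear, or if α = t·β with t > 0 not a ratio of two odd positive integers), then ⟨𝒞(α·x), 𝒞(β·x)⟩ = 0 and ⟨𝒮(α·x), 𝒮(β·x)⟩ = 0 in L²([0,1]^d). -/

import Mathlib

open MeasureTheory Filter Topology
open Real

/-- The 1-periodic piecewise linear "cosine-like" function:
`𝒞(x) = 4|x - 1/2| - 1` on `[0,1]`, extended by `𝒞(x) = 𝒞(x - ⌊x⌋)`. -/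
noncomputable def Cfun (x : ℝ) : ℝ := 4 * |Int.fract x - 1 / 2| - 1

/-- The 1-periodic piecewise linear "sine-like" function:
`𝒮(x) = |2 - 4|x - 1/4|| - 1` on `[0,1]`, extended by `𝒮(x) = 𝒮(x - ⌊x⌋)`. -/
noncomputable def Sfun (x : ℝ) : ℝ := abs (2 - 4 * |Int.fract x - 1 / 4|) - 1

/-- `α ▹ 0`: the first nonzero entry of the integer vector `α` is positive. -/
def PosLead {d : ℕ} (α : Fin d → ℤ) : Prop :=
  ∃ i : Fin d, 0 < α i ∧ ∀ j : Fin d, j < i → α j = 0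

noncomputable def cc (n : ℕ) : ℝ := 8/π^2 * (1/((2*n+1 : ℕ):ℝ)^2)

noncomputable def cubeM (d : ℕ) : Measure (Fin d → ℝ) :=
  Measure.pi fun _ => volume.restrict (Set.Icc (0:ℝ) 1)

noncomputable def Bf (x : ℝ) : ℝ := (Int.fract x) ^ 2 - Int.fract x + 1 / 6

lemma bern2_eval (x : ℝ) : (Polynomial.map (algebraMap ℚ ℝ) (Polynomial.bernoulli 2)).eval x = x^2 - x + 1/6 := by
  simp [Polynomial.bernoulli, Finset.sum_range_succ, bernoulli_one,
    bernoulli_eq_bernoulli'_of_ne_one (by norm_num : (2:ℕ) ≠ 1), bernoulli'_two]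
  ring

lemma hasSum_cos_Icc {x : ℝ} (hx : x ∈ Set.Icc (0:ℝ) 1) :
    HasSum (fun n : ℕ => 1 / (n : ℝ) ^ 2 * Real.cos (2 * π * n * x))
      (π ^ 2 * (x ^ 2 - x + 1 / 6)) := by
  have := hasSum_one_div_nat_pow_mul_cos (k := 1) one_ne_zero hx
  rw [bern2_eval] at this
  convert this using 2 <;> norm_num <;> ring

lemma hasSum_cos_all (x : ℝ) :
    HasSum (fun n : ℕ => 1 / (n : ℝ) ^ 2 * Real.cos (2 * π * n * x))
      (π ^ 2 * ((Int.fract x) ^ 2 - Int.fract x + 1 / 6)) := by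
  have h := hasSum_cos_Icc (x := Int.fract x)
    ⟨Int.fract_nonneg x, (Int.fract_lt_one x).le⟩
  convert h using 2 with n
  have : 2 * π * n * x = 2 * π * n * Int.fract x + (n * ⌊x⌋) * (2 * π) := by
    rw [Int.fract]; push_cast; ring
  rw [this]
  rw [show ((n : ℝ) * ⌊x⌋) * (2*π) = ((n * ⌊x⌋ : ℤ) : ℝ) * (2*π) by push_cast; ring]
  rw [Real.cos_add_int_mul_two_pi]

lemma hasSum_cos_all' (x : ℝ) :
    HasSum (fun n : ℕ => 1 / (n : ℝ) ^ 2 * Real.cos (2 * π * n * x)) (π ^ 2 * Bf x) :=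
  hasSum_cos_all x

lemma fract_two_mul (x : ℝ) :
    (Int.fract x < 1/2 ∧ Int.fract (2*x) = 2 * Int.fract x) ∨
    (1/2 ≤ Int.fract x ∧ Int.fract (2*x) = 2 * Int.fract x - 1) := by
  have h0 := Int.fract_nonneg x
  have h1 := Int.fract_lt_one x
  have key : Int.fract (2*x) = Int.fract (2 * Int.fract x) := by
    conv_lhs => rw [show (2:ℝ)*x = 2 * Int.fract x + ((2*⌊x⌋ : ℤ) : ℝ) by rw [Int.fract]; push_cast; ring]
    rw [Int.fract_add_intCast]
  rcases lt_or_ge (Int.fract x) (1/2) with h | h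
  · left; refine ⟨h, ?_⟩
    rw [key, Int.fract_eq_self.mpr ⟨by linarith, by linarith⟩]
  · right; refine ⟨h, ?_⟩
    rw [key, show (2:ℝ) * Int.fract x = (2 * Int.fract x - 1) + ((1:ℤ):ℝ) by push_cast; ring,
      Int.fract_add_intCast, Int.fract_eq_self.mpr ⟨by linarith, by linarith⟩]
    norm_num

lemma Cfun_eq_B (x : ℝ) : Cfun x = 8 * (Bf x - Bf (2*x) / 4) := by
  unfold Cfun Bf
  have h0 := Int.fract_nonneg x
  have h1 := Int.fract_lt_one x
  rcases fract_two_mul x with ⟨h, he⟩ | ⟨h, he⟩ <;> rw [he]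
  · rw [abs_of_nonpos (by linarith)]; ring
  · rw [abs_of_nonneg (by linarith)]; ring

lemma hasSum_Cfun_aux (x : ℝ) :
    HasSum (fun n : ℕ => 1 / ((2*n+1 : ℕ) : ℝ) ^ 2 * Real.cos (2 * π * ((2*n+1 : ℕ) : ℝ) * x))
      (π ^ 2 / 8 * Cfun x) := by
  set f : ℕ → ℝ := fun n => 1 / (n : ℝ) ^ 2 * Real.cos (2 * π * n * x) with hf
  have hall : HasSum f (π ^ 2 * Bf x) := hasSum_cos_all' x
  have heven : HasSum (fun n : ℕ => f (2*n)) (π ^ 2 * Bf (2*x) / 4) := by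
    have h2 := (hasSum_cos_all' (2*x)).div_const 4
    convert h2 using 2 with n
    · rfl
    simp only [hf]
    rcases Nat.eq_zero_or_pos n with rfl | hn
    · norm_num
    · have hn' : (n:ℝ) ≠ 0 := Nat.cast_ne_zero.mpr hn.ne'
      push_cast
      rw [show 2 * π * (2 * (n:ℝ)) * x = 2 * π * n * (2*x) by ring]
      ring
  have hsumm : Summable (fun n : ℕ => f (2*n+1)) := by
    have hinj : Function.Injective (fun n : ℕ => 2*n+1) := by
      intro a b hab; dsimp at hab; omega
    exact (hall.summable).comp_injective hinj
  have hodd : HasSum (fun n : ℕ => f (2*n+1)) (π^2 * Bf x - π ^ 2 * Bf (2*x) / 4) := by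
    have hx := hsumm.hasSum
    have heq := hall.unique (heven.even_add_odd hx)
    have : π^2 * Bf x - π ^ 2 * Bf (2*x) / 4 = ∑' n, f (2*n+1) := by linarith
    rw [this]; exact hx
  have hval : π ^ 2 / 8 * Cfun x = π^2 * Bf x - π ^ 2 * Bf (2*x) / 4 := by
    rw [Cfun_eq_B]; ring
  rw [hval]
  convert hodd using 2 with n

lemma fract_sub_quarter (x : ℝ) :
    Int.fract (x - 1/4)
      = if Int.fract x < 1/4 then Int.fract x + 3/4 else Int.fract x - 1/4 := by
  have h0 := Int.fract_nonneg x
  have h1 := Int.fract_lt_one x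
  have key : Int.fract (x - 1/4) = Int.fract (Int.fract x - 1/4) := by
    conv_lhs => rw [show x - 1/4 = (Int.fract x - 1/4) + ((⌊x⌋ : ℤ) : ℝ) by
      rw [Int.fract]; push_cast; ring]
    rw [Int.fract_add_intCast]
  rw [key]
  split_ifs with h
  · rw [show Int.fract x - 1/4 = (Int.fract x + 3/4) + ((-1 : ℤ) : ℝ) by push_cast; ring,
      Int.fract_add_intCast, Int.fract_eq_self.mpr ⟨by linarith, by linarith⟩]
  · rw [Int.fract_eq_self.mpr ⟨by linarith, by linarith⟩]

lemma Sfun_eq (x : ℝ) : Sfun x = Cfun (x - 1/4) := by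
  unfold Sfun Cfun
  rw [fract_sub_quarter]
  have h0 := Int.fract_nonneg x
  have h1 := Int.fract_lt_one x
  set u := Int.fract x with hu
  split_ifs with h
  · rw [abs_of_nonpos (by linarith : u - 1/4 ≤ 0),
      show u + 3/4 - 1/2 = u + 1/4 by ring,
      abs_of_nonneg (by linarith : (0:ℝ) ≤ u + 1/4),
      abs_of_nonneg (by linarith : (0:ℝ) ≤ 2 - 4 * -(u - 1/4))]
    ring
  · push_neg at h
    rw [abs_of_nonneg (by linarith : (0:ℝ) ≤ u - 1/4)]
    rcases le_or_gt u (3/4) with h2 | h2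
    · rw [abs_of_nonneg (by linarith : (0:ℝ) ≤ 2 - 4*(u - 1/4)),
        abs_of_nonpos (by linarith : u - 1/4 - 1/2 ≤ 0)]
      ring
    · rw [abs_of_nonpos (by linarith : 2 - 4*(u - 1/4) ≤ 0),
        abs_of_nonneg (by linarith : (0:ℝ) ≤ u - 1/4 - 1/2)]
      ring

lemma Cfun_abs_le (x : ℝ) : |Cfun x| ≤ 1 := by
  unfold Cfun
  have h0 := Int.fract_nonneg x
  have h1 := Int.fract_lt_one x
  rw [abs_le]
  rcases abs_cases (Int.fract x - 1/2) with ⟨he, hs⟩ | ⟨he, hs⟩ <;> rw [he] <;>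
    constructor <;> linarith

lemma Cfun_measurable : Measurable Cfun := by
  unfold Cfun
  exact (((measurable_fract.sub_const _).abs).const_mul 4).sub_const 1

instance cubeProb : IsProbabilityMeasure (volume.restrict (Set.Icc (0:ℝ) 1)) :=
  ⟨by simp [Real.volume_Icc]⟩

instance cubeMProb (d : ℕ) : IsProbabilityMeasure (cubeM d) :=
  inferInstanceAs (IsProbabilityMeasure
    (Measure.pi fun _ : Fin d => volume.restrict (Set.Icc (0:ℝ) 1)))

lemma cube_eq (d : ℕ) :
    (volume : Measure (Fin d → ℝ)).restrict (Set.Icc 0 1) = cubeM d := by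
  unfold cubeM
  rw [← Set.pi_univ_Icc, volume_pi]
  refine (Measure.pi_eq fun s hs => ?_).symm
  rw [Measure.restrict_apply (MeasurableSet.univ_pi hs), ← Set.pi_inter_distrib,
    Measure.pi_pi]
  exact Finset.prod_congr rfl fun i _ => (Measure.restrict_apply (hs i)).symm

lemma int_cos_one (k : ℤ) (hk : k ≠ 0) (c : ℝ) :
    ∫ t in Set.Icc (0:ℝ) 1, Real.cos (2*π*(k:ℝ)*t + c) = 0 := by
  rw [integral_Icc_eq_integral_Ioc, ← intervalIntegral.integral_of_le zero_le_one]
  have hk' : (k:ℝ) ≠ 0 := Int.cast_ne_zero.mpr hk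
  have h2 : (2*π*(k:ℝ)) ≠ 0 := by
    have := Real.pi_ne_zero; positivity
  have := intervalIntegral.integral_comp_mul_add (a := 0) (b := 1) (f := Real.cos) h2 c
  rw [this, integral_cos]
  rw [show 2*π*(k:ℝ)*1 + c = c + k * (2*π) by ring, Real.sin_add_int_mul_two_pi]
  simp

lemma cos_sum_measurable {d : ℕ} (γ : Fin d → ℤ) (c : ℝ) :
    Measurable fun x : Fin d → ℝ => Real.cos (2*π*(∑ i, (γ i:ℝ) * x i) + c) := by
  apply Measurable.cos
  apply Measurable.add_const
  exact (Finset.univ.measurable_sum (fun i _ => (measurable_pi_apply i).const_mul _)).const_mul _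

lemma integral_cube_cos : ∀ {d : ℕ} (γ : Fin d → ℤ), γ ≠ 0 → ∀ (c : ℝ),
    ∫ x, Real.cos (2*π*(∑ i, (γ i:ℝ) * x i) + c) ∂(cubeM d) = 0 := by
  intro d
  match d with
  | 0 => intro γ hγ c; exact absurd (funext fun i => i.elim0) hγ
  | n+1 =>
    intro γ hγ c
    obtain ⟨i, hi⟩ : ∃ i, γ i ≠ 0 := Function.ne_iff.mp hγ
    set e := MeasurableEquiv.piFinSuccAbove (fun _ : Fin (n+1) => ℝ) i with he
    have hmp := measurePreserving_piFinSuccAbove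
      (fun _ : Fin (n+1) => volume.restrict (Set.Icc (0:ℝ) 1)) i
    set F : (Fin (n+1) → ℝ) → ℝ := fun x => Real.cos (2*π*(∑ j, (γ j:ℝ) * x j) + c) with hF
    have key := hmp.integral_comp' (g := fun p => F (e.symm p))
    simp only [← he, MeasurableEquiv.symm_apply_apply] at key
    have hFe : ∀ (t : ℝ) (y : Fin n → ℝ),
        F (e.symm (t, y)) = Real.cos (2*π*((γ i : ℝ))*t +
          (2*π*(∑ j, (γ (i.succAbove j):ℝ) * y j) + c)) := by
      intro t y
      simp only [hF, he, MeasurableEquiv.piFinSuccAbove_symm_apply]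
      rw [Fin.sum_univ_succAbove
        (fun j => (γ j:ℝ) * ((Fin.insertNthEquiv (fun _ => ℝ) i) (t, y)) j) i]
      simp only [Fin.insertNthEquiv_apply, Fin.insertNth_apply_same,
        Fin.insertNth_apply_succAbove]
      congr 1
      ring
    have hInt : Integrable (fun p : ℝ × (Fin n → ℝ) => F (e.symm p))
        ((volume.restrict (Set.Icc (0:ℝ) 1)).prod
          (Measure.pi fun _ : Fin n => volume.restrict (Set.Icc (0:ℝ) 1))) := by
      constructor
      · exact ((cos_sum_measurable γ c).comp e.symm.measurable).aestronglyMeasurable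
      · apply HasFiniteIntegral.of_bounded (C := 1)
        filter_upwards with p
        simp only [hF, Real.norm_eq_abs]
        exact Real.abs_cos_le_one _
    have goal : ∫ x, F x ∂(cubeM (n+1)) = 0 := by
      unfold cubeM
      rw [key, integral_prod_symm _ hInt]
      have inner : ∀ y : Fin n → ℝ,
          (∫ t in Set.Icc (0:ℝ) 1, F (e.symm (t, y))) = 0 := by
        intro y
        simp only [hFe]
        exact int_cos_one (γ i) hi _
      simp only [inner, integral_zero]
    exact goal

lemma cos_integrable {d : ℕ} (γ : Fin d → ℤ) (c : ℝ) :
    Integrable (fun x : Fin d → ℝ => Real.cos (2*π*(∑ i, (γ i:ℝ) * x i) + c)) (cubeM d) := by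
  refine ⟨(cos_sum_measurable γ c).aestronglyMeasurable, ?_⟩
  apply HasFiniteIntegral.of_bounded (C := 1)
  filter_upwards with x
  simp only [Real.norm_eq_abs]
  exact Real.abs_cos_le_one _

lemma integral_cube_cos_mul {d : ℕ} (γ δ : Fin d → ℤ) (φ ψ : ℝ)
    (h1 : (fun i => γ i - δ i) ≠ 0) (h2 : (fun i => γ i + δ i) ≠ 0) :
    ∫ x, Real.cos (2*π*(∑ i, (γ i:ℝ) * x i) + φ) *
      Real.cos (2*π*(∑ i, (δ i:ℝ) * x i) + ψ) ∂(cubeM d) = 0 := by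
  have hpt : ∀ x : Fin d → ℝ,
      Real.cos (2*π*(∑ i, (γ i:ℝ) * x i) + φ) * Real.cos (2*π*(∑ i, (δ i:ℝ) * x i) + ψ)
        = (Real.cos (2*π*(∑ i, ((γ i - δ i : ℤ):ℝ) * x i) + (φ - ψ))
          + Real.cos (2*π*(∑ i, ((γ i + δ i : ℤ):ℝ) * x i) + (φ + ψ))) / 2 := by
    intro x
    have hs : (∑ i, ((γ i - δ i : ℤ):ℝ) * x i)
        = (∑ i, (γ i:ℝ) * x i) - (∑ i, (δ i:ℝ) * x i) := by
      rw [← Finset.sum_sub_distrib]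
      exact Finset.sum_congr rfl fun i _ => by push_cast; ring
    have ha : (∑ i, ((γ i + δ i : ℤ):ℝ) * x i)
        = (∑ i, (γ i:ℝ) * x i) + (∑ i, (δ i:ℝ) * x i) := by
      rw [← Finset.sum_add_distrib]
      exact Finset.sum_congr rfl fun i _ => by push_cast; ring
    rw [hs, ha, show 2*π*((∑ i, (γ i:ℝ) * x i) - ∑ i, (δ i:ℝ) * x i) + (φ - ψ)
        = (2*π*(∑ i, (γ i:ℝ) * x i) + φ) - (2*π*(∑ i, (δ i:ℝ) * x i) + ψ) by ring,
      show 2*π*((∑ i, (γ i:ℝ) * x i) + ∑ i, (δ i:ℝ) * x i) + (φ + ψ)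
        = (2*π*(∑ i, (γ i:ℝ) * x i) + φ) + (2*π*(∑ i, (δ i:ℝ) * x i) + ψ) by ring,
]
    generalize (2*π*(∑ i, (γ i:ℝ) * x i) + φ) = A
    generalize (2*π*(∑ i, (δ i:ℝ) * x i) + ψ) = B
    rw [Real.cos_sub, Real.cos_add]
    ring
  rw [show (fun x : Fin d → ℝ => Real.cos (2*π*(∑ i, (γ i:ℝ) * x i) + φ) *
      Real.cos (2*π*(∑ i, (δ i:ℝ) * x i) + ψ)) = fun x =>
      (Real.cos (2*π*(∑ i, ((γ i - δ i : ℤ):ℝ) * x i) + (φ - ψ))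
        + Real.cos (2*π*(∑ i, ((γ i + δ i : ℤ):ℝ) * x i) + (φ + ψ))) / 2 from funext hpt]
  rw [integral_div, integral_add (cos_integrable _ _) (cos_integrable _ _),
    integral_cube_cos _ h1, integral_cube_cos _ h2]
  norm_num

lemma cc_nonneg (n : ℕ) : 0 ≤ cc n := by
  unfold cc
  have := Real.pi_pos
  positivity

-- interchange of sum and integral, with uniform bounds
lemma integral_tsum_bounded {d : ℕ} (a : ℕ → (Fin d → ℝ) → ℝ) (bound : ℕ → ℝ)
    (hmeas : ∀ n, Measurable (a n)) (hb : ∀ n x, |a n x| ≤ bound n)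
    (hbs : Summable bound) :
    ∫ x, ∑' n, a n x ∂(cubeM d) = ∑' n, ∫ x, a n x ∂(cubeM d) := by
  have hb0 : ∀ n, 0 ≤ bound n := fun n => le_trans (abs_nonneg _) (hb n (fun _ => 0))
  refine integral_tsum (fun n => (hmeas n).aestronglyMeasurable) ?_
  have hle : ∀ n, ∫⁻ x, ‖a n x‖₊ ∂(cubeM d) ≤ ENNReal.ofReal (bound n) := by
    intro n
    calc ∫⁻ x, (‖a n x‖₊ : ENNReal) ∂(cubeM d)
        ≤ ∫⁻ _, ENNReal.ofReal (bound n) ∂(cubeM d) := by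
          refine lintegral_mono fun x => ?_
          rw [← enorm_eq_nnnorm, ← ofReal_norm]
          exact ENNReal.ofReal_le_ofReal (by simpa using hb n x)
      _ = ENNReal.ofReal (bound n) := by
          rw [lintegral_const, measure_univ, mul_one]
  refine ne_top_of_le_ne_top ?_ (ENNReal.tsum_le_tsum hle)
  rw [← ENNReal.ofReal_tsum_of_nonneg hb0 hbs]
  exact ENNReal.ofReal_ne_top

lemma master {d : ℕ} (α β : Fin d → ℤ) (F G : ℝ → ℝ) (φ ψ : ℕ → ℝ)
    (hF : ∀ t : ℝ, HasSum
      (fun n : ℕ => cc n * Real.cos (2*π*(((2*n+1 : ℕ)):ℝ)*t + φ n)) (F t))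
    (hG : ∀ t : ℝ, HasSum
      (fun n : ℕ => cc n * Real.cos (2*π*(((2*n+1 : ℕ)):ℝ)*t + ψ n)) (G t))
    (hFm : Measurable F) (hGm : Measurable G)
    (hGb : ∀ t, |G t| ≤ 1)
    (hsub : ∀ n m : ℕ, (fun i => ((2*n+1:ℕ):ℤ) * α i - ((2*m+1:ℕ):ℤ) * β i) ≠ 0)
    (hadd : ∀ n m : ℕ, (fun i => ((2*n+1:ℕ):ℤ) * α i + ((2*m+1:ℕ):ℤ) * β i) ≠ 0) :
    ∫ x, F (∑ i, (α i:ℝ) * x i) * G (∑ i, (β i:ℝ) * x i) ∂(cubeM d) = 0 := by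
  have ccsum : Summable cc := by
    have h0 := hF 0
    -- can't use; instead directly
    have : Summable (fun n : ℕ => 8/π^2 * (1/((n:ℝ)+1)^2)) := by
      apply Summable.mul_left
      exact_mod_cast (summable_nat_add_iff 1).mpr (Real.summable_one_div_nat_pow.mpr one_lt_two)
    refine this.of_nonneg_of_le cc_nonneg fun n => ?_
    unfold cc
    have h1 : ((n:ℝ)+1)^2 ≤ ((2*n+1 : ℕ):ℝ)^2 := by
      push_cast; nlinarith [Nat.cast_nonneg (α := ℝ) n]
    have h2 : (0:ℝ) < ((n:ℝ)+1)^2 := by positivity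
    have hpi : (0:ℝ) < 8/π^2 := by have := Real.pi_pos; positivity
    exact mul_le_mul_of_nonneg_left (one_div_le_one_div_of_le h2 h1) hpi.le
  -- rewrite cosine arguments into γ-form
  have harg : ∀ (γ : Fin d → ℤ) (k : ℕ) (x : Fin d → ℝ) (c : ℝ),
      2*π*(((k:ℕ)):ℝ)*(∑ i, (γ i:ℝ) * x i) + c
        = 2*π*(∑ i, (((k:ℤ) * γ i : ℤ):ℝ) * x i) + c := by
    intro γ k x c
    have : (∑ i, (((k:ℤ) * γ i : ℤ):ℝ) * x i) = (k:ℝ) * ∑ i, (γ i:ℝ) * x i := by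
      rw [Finset.mul_sum]
      exact Finset.sum_congr rfl fun i _ => by push_cast; ring
    rw [this]; ring
  set g : (Fin d → ℝ) → ℝ := fun x => G (∑ i, (β i:ℝ) * x i) with hg
  have hgm : Measurable g :=
    hGm.comp (Finset.univ.measurable_sum fun i _ => (measurable_pi_apply i).const_mul _)
  set A : ℕ → (Fin d → ℝ) → ℝ := fun n x =>
    cc n * Real.cos (2*π*(∑ i, ((((2*n+1:ℕ):ℤ) * α i : ℤ):ℝ) * x i) + φ n) with hA
  set B : ℕ → (Fin d → ℝ) → ℝ := fun m x =>
    cc m * Real.cos (2*π*(∑ i, ((((2*m+1:ℕ):ℤ) * β i : ℤ):ℝ) * x i) + ψ m) with hB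
  have hFx : ∀ x : Fin d → ℝ, HasSum (fun n => A n x) (F (∑ i, (α i:ℝ) * x i)) := by
    intro x
    have := hF (∑ i, (α i:ℝ) * x i)
    simp only [harg α _ x] at this
    exact this
  have hGx : ∀ x : Fin d → ℝ, HasSum (fun m => B m x) (g x) := by
    intro x
    have := hG (∑ i, (β i:ℝ) * x i)
    simp only [harg β _ x] at this
    exact this
  have habs : ∀ (c : ℝ), 0 ≤ c → ∀ y : ℝ, |c * Real.cos y| ≤ c := by
    intro c hc y
    rw [abs_mul, abs_of_nonneg hc]
    exact (mul_le_mul_of_nonneg_left (Real.abs_cos_le_one _) hc).trans_eq (mul_one _)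
  have hAb : ∀ n x, |A n x * g x| ≤ cc n := by
    intro n x
    rw [abs_mul]
    have h1 : |A n x| ≤ cc n := habs _ (cc_nonneg n) _
    calc |A n x| * |g x| ≤ cc n * 1 := mul_le_mul h1 (hGb _) (abs_nonneg _) (cc_nonneg n)
      _ = cc n := mul_one _
  have hAm : ∀ n, Measurable (fun x => A n x * g x) := by
    intro n
    exact ((cos_sum_measurable _ (φ n)).const_mul (cc n)).mul hgm
  -- step 1
  have step1 : ∫ x, F (∑ i, (α i:ℝ) * x i) * g x ∂(cubeM d)
      = ∑' n, ∫ x, A n x * g x ∂(cubeM d) := by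
    rw [show (fun x : Fin d → ℝ => F (∑ i, (α i:ℝ) * x i) * g x)
        = fun x => ∑' n, A n x * g x from funext fun x =>
          (((hFx x).mul_right (g x)).tsum_eq).symm]
    exact integral_tsum_bounded _ cc hAm hAb ccsum
  rw [step1]
  -- step 2: each term is zero
  have step2 : ∀ n : ℕ, ∫ x, A n x * g x ∂(cubeM d) = 0 := by
    intro n
    have hpt : ∀ x : Fin d → ℝ, A n x * g x = ∑' m, A n x * B m x :=
      fun x => (((hGx x).mul_left (A n x)).tsum_eq).symm
    rw [show (fun x : Fin d → ℝ => A n x * g x) = fun x => ∑' m, A n x * B m x from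
      funext hpt]
    have hABm : ∀ m, Measurable (fun x => A n x * B m x) := fun m =>
      ((cos_sum_measurable _ (φ n)).const_mul (cc n)).mul
        ((cos_sum_measurable _ (ψ m)).const_mul (cc m))
    have hABb : ∀ m x, |A n x * B m x| ≤ cc n * cc m := by
      intro m x
      rw [abs_mul]
      have h1 : |A n x| ≤ cc n := habs _ (cc_nonneg n) _
      have h2 : |B m x| ≤ cc m := habs _ (cc_nonneg m) _
      exact mul_le_mul h1 h2 (abs_nonneg _) (cc_nonneg n)
    rw [integral_tsum_bounded _ (fun m => cc n * cc m) hABm hABb (ccsum.mul_left _)]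
    have term : ∀ m : ℕ, ∫ x, A n x * B m x ∂(cubeM d) = 0 := by
      intro m
      have : (fun x : Fin d → ℝ => A n x * B m x) = fun x => (cc n * cc m) *
          (Real.cos (2*π*(∑ i, ((((2*n+1:ℕ):ℤ) * α i : ℤ):ℝ) * x i) + φ n) *
           Real.cos (2*π*(∑ i, ((((2*m+1:ℕ):ℤ) * β i : ℤ):ℝ) * x i) + ψ m)) := by
        funext x; rw [hA, hB]; ring
      rw [this, integral_const_mul,
        integral_cube_cos_mul (fun i => ((2*n+1:ℕ):ℤ) * α i) (fun i => ((2*m+1:ℕ):ℤ) * β i)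
          (φ n) (ψ m) (hsub n m) (hadd n m), mul_zero]
    simp only [term, tsum_zero]
  simp only [step2, tsum_zero]

lemma hasSum_Cfun (φ : ℕ → ℝ) (hφ : ∀ n, φ n = 0) (t : ℝ) :
    HasSum (fun n : ℕ => cc n * Real.cos (2*π*(((2*n+1 : ℕ)):ℝ)*t + φ n)) (Cfun t) := by
  have hπ : (π:ℝ)^2 ≠ 0 := pow_ne_zero _ Real.pi_ne_zero
  have h := (hasSum_Cfun_aux t).mul_left (8/π^2)
  have hv : 8/π^2 * (π^2/8 * Cfun t) = Cfun t := by field_simp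
  rw [hv] at h
  convert h using 2 with n
  · rfl
  rw [hφ n, add_zero, cc]
  ring

lemma hasSum_Sfun (t : ℝ) :
    HasSum (fun n : ℕ => cc n * Real.cos (2*π*(((2*n+1 : ℕ)):ℝ)*t
      + (-(((2*n+1 : ℕ)):ℝ)*π/2))) (Sfun t) := by
  rw [Sfun_eq]
  have h := hasSum_Cfun (fun _ => 0) (fun _ => rfl) (t - 1/4)
  have harg : ∀ n : ℕ, 2*π*(((2*n+1 : ℕ)):ℝ)*(t - 1/4) + (fun _ : ℕ => (0:ℝ)) n
      = 2*π*(((2*n+1 : ℕ)):ℝ)*t + (-(((2*n+1 : ℕ)):ℝ)*π/2) := by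
    intro n; simp only []; push_cast; ring
  simpa only [harg] using h

lemma Sfun_abs_le (x : ℝ) : |Sfun x| ≤ 1 := by rw [Sfun_eq]; exact Cfun_abs_le _
lemma Sfun_measurable : Measurable Sfun := by
  have : Sfun = fun x => Cfun (x - 1/4) := funext Sfun_eq
  rw [this]
  exact Cfun_measurable.comp (measurable_id.sub_const _)

theorem inner_CC_SS_multivariate_eq_zero (d : ℕ) (hd : 1 ≤ d) (α β : Fin d → ℤ)
    (hα : PosLead α) (hβ : PosLead β)
    (h : ¬ ∃ a b : ℕ, Odd a ∧ Odd b ∧ 0 < a ∧ 0 < b ∧ ∀ i, (a : ℤ) * α i = (b : ℤ) * β i) :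
    (∫ x in Set.Icc (0 : Fin d → ℝ) 1,
        Cfun (∑ i, (α i : ℝ) * x i) * Cfun (∑ i, (β i : ℝ) * x i) = 0) ∧
    (∫ x in Set.Icc (0 : Fin d → ℝ) 1,
        Sfun (∑ i, (α i : ℝ) * x i) * Sfun (∑ i, (β i : ℝ) * x i) = 0) := by
  have hsub : ∀ n m : ℕ, (fun i => ((2*n+1:ℕ):ℤ) * α i - ((2*m+1:ℕ):ℤ) * β i) ≠ 0 := by
    intro n m hz
    apply h
    refine ⟨2*n+1, 2*m+1, ⟨n, by ring⟩, ⟨m, by ring⟩, by omega, by omega, fun i => ?_⟩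
    have := congrFun hz i
    simp only [Pi.zero_apply] at this
    push_cast
    push_cast at this
    linarith
  have hadd : ∀ n m : ℕ, (fun i => ((2*n+1:ℕ):ℤ) * α i + ((2*m+1:ℕ):ℤ) * β i) ≠ 0 := by
    intro n m hz
    obtain ⟨i, hαi, hα0⟩ := hα
    obtain ⟨i', hβi, hβ0⟩ := hβ
    have hz' : ∀ j, ((2*n+1:ℕ):ℤ) * α j + ((2*m+1:ℕ):ℤ) * β j = 0 := by
      intro j
      have := congrFun hz j
      simpa using this
    have hn : (0:ℤ) < ((2*n+1:ℕ):ℤ) := by positivity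
    have hm : (0:ℤ) < ((2*m+1:ℕ):ℤ) := by positivity
    rcases lt_trichotomy i i' with hlt | rfl | hlt
    · have hb0 : β i = 0 := hβ0 i hlt
      have := hz' i
      rw [hb0] at this
      nlinarith
    · have := hz' i
      nlinarith
    · have ha0 : α i' = 0 := hα0 i' hlt
      have := hz' i'
      rw [ha0] at this
      nlinarith
  constructor
  · rw [show (∫ x in Set.Icc (0 : Fin d → ℝ) 1,
        Cfun (∑ i, (α i : ℝ) * x i) * Cfun (∑ i, (β i : ℝ) * x i))
      = ∫ x, Cfun (∑ i, (α i : ℝ) * x i) * Cfun (∑ i, (β i : ℝ) * x i) ∂(cubeM d) from by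
        rw [← cube_eq d]]
    exact master α β Cfun Cfun (fun _ => 0) (fun _ => 0)
      (hasSum_Cfun _ (fun _ => rfl)) (hasSum_Cfun _ (fun _ => rfl))
      Cfun_measurable Cfun_measurable Cfun_abs_le hsub hadd
  · rw [show (∫ x in Set.Icc (0 : Fin d → ℝ) 1,
        Sfun (∑ i, (α i : ℝ) * x i) * Sfun (∑ i, (β i : ℝ) * x i))
      = ∫ x, Sfun (∑ i, (α i : ℝ) * x i) * Sfun (∑ i, (β i : ℝ) * x i) ∂(cubeM d) from by
        rw [← cube_eq d]]
    exact master α β Sfun Sfun _ _ hasSum_Sfun hasSum_Sfun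
      Sfun_measurable Sfun_measurable Sfun_abs_le hsub hadd
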